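/- Let ψ be analytic on 𝔻 with ψ(𝔻) ⊆ 𝔻 and ∫_𝔻 (|ψ''(z)| + |ψ'(z)|²) dA(z) < ∞, let f be analytic on 𝔻 with ∫_𝔻 |f''(z)| dA(z) < ∞, and let (α_n) be a sequence in 𝔻 with |α_n| → 1. Then for every ε > 0 there exists N such that for all n ≥ N: ∫_𝔻 |(φ_{α_n}∘ψ)''(z) − f''(z)| dA(z) ≥ ∫_𝔻 |(φ_{α_n}∘ψ)''(z)| dA(z) − ε. -/

import Mathlib

open MeasureTheory Metric Complex Filter

/-- Normalized area measure on the unit disk (total mass 1). -/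
noncomputable def dA : Measure ℂ :=
  (ENNReal.ofReal Real.pi)⁻¹ • volume.restrict (ball (0:ℂ) 1)

/-- The Möbius map `φ_a(z) = (a - z)/(1 - conj a · z)`. -/
noncomputable def phi (a z : ℂ) : ℂ := (a - z) / (1 - (starRingEnd ℂ) a * z)

/-! ### Auxiliary definitions and lemmas -/

noncomputable def Complex.abs : AbsoluteValue ℂ ℝ :=
  IsAbsoluteValue.toAbsoluteValue (norm : ℂ → ℝ)

@[simp]
theorem Complex.abs_apply (z : ℂ) : Complex.abs z = ‖z‖ := rfl

theorem Complex.norm_eq_abs (z : ℂ) : ‖z‖ = Complex.abs z := rfl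

theorem Complex.abs_conj (z : ℂ) : Complex.abs ((starRingEnd ℂ) z) = Complex.abs z :=
  Complex.norm_conj z

theorem Complex.abs_ofReal (r : ℝ) : Complex.abs (r : ℂ) = |r| := Complex.norm_real r

theorem Complex.continuous_abs : Continuous Complex.abs := continuous_norm

noncomputable def phi1 (a z : ℂ) : ℂ :=
  ((starRingEnd ℂ) a * a - 1) / (1 - (starRingEnd ℂ) a * z) ^ 2

noncomputable def phi2 (a z : ℂ) : ℂ :=
  (2 * (starRingEnd ℂ) a * ((starRingEnd ℂ) a * a - 1)) / (1 - (starRingEnd ℂ) a * z) ^ 3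

lemma one_sub_ne {a z : ℂ} (ha : Complex.abs a < 1) (hz : Complex.abs z ≤ 1) :
    (1 : ℂ) - (starRingEnd ℂ) a * z ≠ 0 := by
  intro h
  have h1 : (starRingEnd ℂ) a * z = 1 := by linear_combination -h
  have h2 : Complex.abs ((starRingEnd ℂ) a * z) = 1 := by rw [h1]; simp
  rw [map_mul, Complex.abs_conj] at h2
  nlinarith [Complex.abs.nonneg a, Complex.abs.nonneg z]

lemma hasDerivAt_phi {a z : ℂ} (h : (1 : ℂ) - (starRingEnd ℂ) a * z ≠ 0) :
    HasDerivAt (phi a) (phi1 a z) z := by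
  have h1 : HasDerivAt (fun w : ℂ => a - w) (-1) z := (hasDerivAt_id z).const_sub a
  have h2 : HasDerivAt (fun w : ℂ => 1 - (starRingEnd ℂ) a * w) (-(starRingEnd ℂ) a) z := by
    simpa using ((hasDerivAt_id z).const_mul ((starRingEnd ℂ) a)).const_sub 1
  have := h1.div h2 h
  refine this.congr_deriv ?_
  unfold phi1
  field_simp
  ring

lemma hasDerivAt_phi1 {a z : ℂ} (h : (1 : ℂ) - (starRingEnd ℂ) a * z ≠ 0) :
    HasDerivAt (phi1 a) (phi2 a z) z := by
  have h2 : HasDerivAt (fun w : ℂ => 1 - (starRingEnd ℂ) a * w) (-(starRingEnd ℂ) a) z := by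
    simpa using ((hasDerivAt_id z).const_mul ((starRingEnd ℂ) a)).const_sub 1
  have h3 : HasDerivAt (fun w : ℂ => (1 - (starRingEnd ℂ) a * w) ^ 2)
      (2 * (1 - (starRingEnd ℂ) a * z) ^ 1 * (-(starRingEnd ℂ) a)) z := by
    exact (h2.pow 2).congr_deriv (by norm_num)
  have h4 := (hasDerivAt_const z ((starRingEnd ℂ) a * a - 1)).div h3 (pow_ne_zero 2 h)
  refine h4.congr_deriv ?_
  unfold phi2
  field_simp
  ring

lemma deriv2_formula {ψ : ℂ → ℂ} (hψ : DifferentiableOn ℂ ψ (ball (0:ℂ) 1))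
    (hmap : Set.MapsTo ψ (ball (0:ℂ) 1) (ball (0:ℂ) 1))
    {a : ℂ} (ha : Complex.abs a < 1) {z : ℂ} (hz : z ∈ ball (0:ℂ) 1) :
    deriv (deriv (fun w => phi a (ψ w))) z
      = phi2 a (ψ z) * (deriv ψ z) ^ 2 + phi1 a (ψ z) * deriv (deriv ψ) z := by
  have hψa : AnalyticOnNhd ℂ ψ (ball (0:ℂ) 1) := hψ.analyticOnNhd isOpen_ball
  have hne : ∀ w ∈ ball (0:ℂ) 1, (1 : ℂ) - (starRingEnd ℂ) a * ψ w ≠ 0 := fun w hw =>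
    one_sub_ne ha (le_of_lt (by simpa using hmap hw))
  have hd1 : ∀ w ∈ ball (0:ℂ) 1,
      deriv (fun w => phi a (ψ w)) w = phi1 a (ψ w) * deriv ψ w := by
    intro w hw
    exact ((hasDerivAt_phi (hne w hw)).comp w ((hψa w hw).differentiableAt.hasDerivAt)).deriv
  have hev : deriv (fun w => phi a (ψ w)) =ᶠ[nhds z] fun w => phi1 a (ψ w) * deriv ψ w := by
    filter_upwards [isOpen_ball.mem_nhds hz] with w hw using hd1 w hw
  rw [hev.deriv_eq]
  have hψd : HasDerivAt ψ (deriv ψ z) z := (hψa z hz).differentiableAt.hasDerivAt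
  have h1 : HasDerivAt (fun w => phi1 a (ψ w)) (phi2 a (ψ z) * deriv ψ z) z :=
    (hasDerivAt_phi1 (hne z hz)).comp z hψd
  have h2 : HasDerivAt (deriv ψ) (deriv (deriv ψ) z) z :=
    ((hψa.deriv) z hz).differentiableAt.hasDerivAt
  rw [HasDerivAt.deriv (f := fun w => phi1 a (ψ w) * deriv ψ w) (h1.mul h2)]; ring

lemma abs_lower (a w : ℂ) :
    1 - Complex.abs a * Complex.abs w ≤ Complex.abs (1 - (starRingEnd ℂ) a * w) := by
  have := norm_sub_norm_le (1 : ℂ) ((starRingEnd ℂ) a * w)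
  simp only [Complex.norm_eq_abs, map_one, norm_one, map_mul, Complex.abs_conj] at this
  simpa using this

lemma abs_num (a : ℂ) (ha : Complex.abs a ≤ 1) :
    Complex.abs ((starRingEnd ℂ) a * a - 1) = 1 - Complex.abs a ^ 2 := by
  have h1 : (starRingEnd ℂ) a * a = ((Complex.abs a ^ 2 : ℝ) : ℂ) := by
    rw [mul_comm, Complex.mul_conj']
    norm_cast
  rw [h1]
  have : ((Complex.abs a ^ 2 : ℝ) : ℂ) - 1 = (((Complex.abs a ^ 2 - 1 : ℝ)) : ℂ) := by
    push_cast; ring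
  rw [this, Complex.abs_ofReal, abs_of_nonpos (by nlinarith [Complex.abs.nonneg a])]
  ring

lemma phi1_le (a w : ℂ) (d : ℝ) (hd : 0 < d) (hd1 : d ≤ 1) (ha : Complex.abs a ≤ 1)
    (h : d ≤ Complex.abs (1 - (starRingEnd ℂ) a * w)) :
    Complex.abs (phi1 a w) ≤ (1 - Complex.abs a ^ 2) * (2 / d ^ 3) := by
  have habs : Complex.abs (phi1 a w) =
      (1 - Complex.abs a ^ 2) / Complex.abs (1 - (starRingEnd ℂ) a * w) ^ 2 := by
    unfold phi1; rw [map_div₀, map_pow, abs_num a ha]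
  rw [habs]
  have hpos : (0:ℝ) < Complex.abs (1 - (starRingEnd ℂ) a * w) := lt_of_lt_of_le hd h
  have hnum : (0:ℝ) ≤ 1 - Complex.abs a ^ 2 := by nlinarith [Complex.abs.nonneg a]
  calc (1 - Complex.abs a ^ 2) / Complex.abs (1 - (starRingEnd ℂ) a * w) ^ 2
      ≤ (1 - Complex.abs a ^ 2) / d ^ 2 := by
        apply div_le_div_of_nonneg_left hnum (by positivity) (by nlinarith)
    _ = (1 - Complex.abs a ^ 2) * (1 / d ^ 2) := by ring
    _ ≤ (1 - Complex.abs a ^ 2) * (2 / d ^ 3) := by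
        apply mul_le_mul_of_nonneg_left _ hnum
        rw [div_le_div_iff₀ (by positivity) (by positivity)]
        nlinarith

lemma phi2_le (a w : ℂ) (d : ℝ) (hd : 0 < d) (ha : Complex.abs a ≤ 1)
    (h : d ≤ Complex.abs (1 - (starRingEnd ℂ) a * w)) :
    Complex.abs (phi2 a w) ≤ (1 - Complex.abs a ^ 2) * (2 / d ^ 3) := by
  have habs : Complex.abs (phi2 a w) =
      2 * Complex.abs a * (1 - Complex.abs a ^ 2)
        / Complex.abs (1 - (starRingEnd ℂ) a * w) ^ 3 := by
    unfold phi2; rw [map_div₀, map_pow, map_mul, map_mul, abs_num a ha]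
    simp [Complex.abs_conj]
  rw [habs]
  have hpos : (0:ℝ) < Complex.abs (1 - (starRingEnd ℂ) a * w) := lt_of_lt_of_le hd h
  have hnum : (0:ℝ) ≤ 1 - Complex.abs a ^ 2 := by nlinarith [Complex.abs.nonneg a]
  have h0a := Complex.abs.nonneg a
  have hcube : d ^ 3 ≤ Complex.abs (1 - (starRingEnd ℂ) a * w) ^ 3 :=
    pow_le_pow_left₀ (le_of_lt hd) h 3
  calc 2 * Complex.abs a * (1 - Complex.abs a ^ 2)
        / Complex.abs (1 - (starRingEnd ℂ) a * w) ^ 3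
      ≤ 2 * (1 - Complex.abs a ^ 2) / d ^ 3 :=
        div_le_div₀ (by nlinarith) (by nlinarith) (by positivity) hcube
    _ = (1 - Complex.abs a ^ 2) * (2 / d ^ 3) := by ring

lemma G_pointwise {ψ : ℂ → ℂ} (hψ : DifferentiableOn ℂ ψ (ball (0:ℂ) 1))
    (hmap : Set.MapsTo ψ (ball (0:ℂ) 1) (ball (0:ℂ) 1))
    {a : ℂ} (ha : Complex.abs a < 1) {z : ℂ} (hz : z ∈ ball (0:ℂ) 1)
    {d : ℝ} (hd : 0 < d) (hd1 : d ≤ 1)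
    (hsep : Complex.abs a * Complex.abs (ψ z) ≤ 1 - d) :
    Complex.abs (deriv (deriv (fun w => phi a (ψ w))) z)
      ≤ (1 - Complex.abs a ^ 2) * (2 / d ^ 3)
          * (Complex.abs (deriv (deriv ψ) z) + Complex.abs (deriv ψ z) ^ 2) := by
  rw [deriv2_formula hψ hmap ha hz]
  have hlow : d ≤ Complex.abs (1 - (starRingEnd ℂ) a * ψ z) :=
    le_trans (by linarith) (abs_lower a (ψ z))
  have h1 := phi1_le a (ψ z) d hd hd1 ha.le hlow
  have h2 := phi2_le a (ψ z) d hd ha.le hlow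
  have htri := Complex.abs.add_le (phi2 a (ψ z) * (deriv ψ z) ^ 2)
    (phi1 a (ψ z) * deriv (deriv ψ) z)
  rw [map_mul, map_mul, map_pow] at htri
  have e1 : (0:ℝ) ≤ Complex.abs (deriv ψ z) ^ 2 := by positivity
  have e2 : (0:ℝ) ≤ Complex.abs (deriv (deriv ψ) z) := Complex.abs.nonneg _
  have e3 : (0:ℝ) ≤ Complex.abs (phi1 a (ψ z)) := Complex.abs.nonneg _
  have e4 : (0:ℝ) ≤ Complex.abs (phi2 a (ψ z)) := Complex.abs.nonneg _
  nlinarith [mul_le_mul_of_nonneg_right h2 e1, mul_le_mul_of_nonneg_right h1 e2]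

lemma dA_ae_ball : ∀ᵐ z ∂dA, z ∈ ball (0:ℂ) 1 :=
  Measure.ae_smul_measure (ae_restrict_mem measurableSet_ball) _

lemma dA_compl_ball : dA ((ball (0:ℂ) 1)ᶜ) = 0 := by
  unfold dA
  rw [Measure.smul_apply, Measure.restrict_apply measurableSet_ball.compl]
  simp

lemma dA_finite (s : Set ℂ) : dA s < ⊤ := by
  unfold dA
  rw [Measure.smul_apply]
  have h1 : volume.restrict (ball (0:ℂ) 1) s ≤ volume (ball (0:ℂ) 1) := by
    rw [Measure.restrict_apply' measurableSet_ball]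
    exact measure_mono Set.inter_subset_right
  refine ENNReal.mul_lt_top ?_ (lt_of_le_of_lt h1 measure_ball_lt_top)
  simp [ENNReal.inv_lt_top]
  positivity

lemma integrable_of_lintegral {g : ℂ → ℂ} (hg : Measurable g)
    (h : (∫⁻ z, ENNReal.ofReal (Complex.abs (g z)) ∂dA) < ⊤) : Integrable g dA := by
  refine ⟨hg.aestronglyMeasurable, ?_⟩
  rw [hasFiniteIntegral_iff_norm]
  simpa using h

lemma small_tail (F : ℂ → ℂ) (hm : Measurable F)
    (hfin : (∫⁻ z, ENNReal.ofReal (Complex.abs (F z)) ∂dA) < ⊤) {ε : ℝ} (hε : 0 < ε) :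
    ∃ r : ℝ, 0 ≤ r ∧ r < 1 ∧ ∫ z in (closedBall (0:ℂ) r)ᶜ, Complex.abs (F z) ∂dA ≤ ε := by
  set ν : Measure ℂ := dA.withDensity (fun z => ENNReal.ofReal (Complex.abs (F z))) with hν
  have hνfin : ν Set.univ < ⊤ := by
    rw [hν, withDensity_apply _ MeasurableSet.univ, Measure.restrict_univ]; exact hfin
  set A : ℕ → Set ℂ := fun k => (closedBall (0:ℂ) (1 - 1/(k+1)))ᶜ with hA
  have hanti : Antitone A := by
    intro k l hkl
    apply Set.compl_subset_compl.2
    apply closedBall_subset_closedBall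
    have : (1:ℝ)/(l+1) ≤ 1/(k+1) := by
      apply one_div_le_one_div_of_le (by positivity) (by exact_mod_cast by omega)
    linarith
  have hInter : (⋂ k, A k) ⊆ (ball (0:ℂ) 1)ᶜ := by
    intro z hz
    simp only [Set.mem_iInter, hA, Set.mem_compl_iff, mem_closedBall,
      Complex.dist_eq, sub_zero, not_le, Complex.norm_eq_abs] at hz
    simp only [Set.mem_compl_iff, mem_ball, Complex.dist_eq, sub_zero, not_lt, Complex.norm_eq_abs]
    by_contra hlt
    push_neg at hlt
    obtain ⟨k, hk⟩ := exists_nat_one_div_lt (show (0:ℝ) < 1 - Complex.abs z by linarith)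
    have := hz k
    push_cast at this hk
    linarith
  have hν0 : ν (⋂ k, A k) = 0 :=
    measure_mono_null hInter (withDensity_absolutelyContinuous dA _ dA_compl_ball)
  have htend : Tendsto (fun k => ν (A k)) atTop (nhds 0) := by
    have := tendsto_measure_iInter_atTop (μ := ν) (s := A)
      (fun k => (measurableSet_closedBall.compl).nullMeasurableSet) hanti
      ⟨0, (lt_of_le_of_lt (measure_mono (Set.subset_univ _)) hνfin).ne⟩
    rwa [hν0] at this
  have hev : ∀ᶠ k in atTop, ν (A k) < ENNReal.ofReal ε :=
    htend.eventually_lt_const (by simpa using hε)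
  obtain ⟨k, hk⟩ := hev.exists
  refine ⟨1 - 1/(k+1), ?_, ?_, ?_⟩
  · have : (1:ℝ)/(k+1) ≤ 1 := by
      apply div_le_one_of_le₀ (by exact_mod_cast Nat.le_add_left 1 k) (by positivity)
    linarith
  · have : (0:ℝ) < 1/(k+1) := by positivity
    linarith
  · have hmeas : MeasurableSet (A k) := measurableSet_closedBall.compl
    have heq : ∫ z in A k, Complex.abs (F z) ∂dA
        = (∫⁻ z in A k, ENNReal.ofReal (Complex.abs (F z)) ∂dA).toReal := by
      rw [integral_eq_lintegral_of_nonneg_ae]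
      · exact Filter.Eventually.of_forall fun z => Complex.abs.nonneg _
      · exact (Complex.continuous_abs.measurable.comp hm).aestronglyMeasurable
    rw [show (closedBall (0:ℂ) (1 - 1/(k+1)))ᶜ = A k from rfl, heq]
    have hw : ν (A k) = ∫⁻ z in A k, ENNReal.ofReal (Complex.abs (F z)) ∂dA :=
      withDensity_apply _ hmeas
    rw [← hw]
    exact ENNReal.toReal_le_of_le_ofReal hε.le hk.le

theorem stmt2 (ψ f : ℂ → ℂ)
    (hψ : DifferentiableOn ℂ ψ (ball (0:ℂ) 1))
    (hmap : Set.MapsTo ψ (ball (0:ℂ) 1) (ball (0:ℂ) 1))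
    (hψint : (∫⁻ z, ENNReal.ofReal
        (norm (deriv (deriv ψ) z) + norm (deriv ψ z) ^ 2) ∂dA) < ⊤)
    (hf : DifferentiableOn ℂ f (ball (0:ℂ) 1))
    (hfint : (∫⁻ z, ENNReal.ofReal (norm (deriv (deriv f) z)) ∂dA) < ⊤)
    (α : ℕ → ℂ) (hα : ∀ n, α n ∈ ball (0:ℂ) 1)
    (hα1 : Tendsto (fun n => norm (α n)) atTop (nhds 1)) :
    ∀ ε > (0:ℝ), ∃ N : ℕ, ∀ n ≥ N,
      (∫ z, norm (deriv (deriv (fun w => phi (α n) (ψ w))) z - deriv (deriv f) z) ∂dA)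
        ≥ (∫ z, norm (deriv (deriv (fun w => phi (α n) (ψ w))) z) ∂dA) - ε := by
  intro ε hε
  set F := deriv (deriv f) with hFdef
  have hmF : Measurable F := measurable_deriv _
  have intF : Integrable F dA := integrable_of_lintegral hmF hfint
  have habs_eq : ∀ g : ℂ → ℂ, (fun z => Complex.abs (g z)) = fun z => ‖g z‖ := by
    intro g; funext z; rw [Complex.norm_eq_abs]
  set G : ℕ → ℂ → ℂ := fun n => deriv (deriv (fun w => phi (α n) (ψ w))) with hGdef
  have haln : ∀ n, Complex.abs (α n) < 1 := fun n => by simpa using hα n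
  have habs0 : ∀ n, (0:ℝ) ≤ Complex.abs (α n) := fun n => Complex.abs.nonneg _
  -- global bound on the ball
  have hGb : ∀ n, ∀ z ∈ ball (0:ℂ) 1, Complex.abs (G n z)
      ≤ (1 - Complex.abs (α n) ^ 2) * (2 / (1 - Complex.abs (α n)) ^ 3)
        * (Complex.abs (deriv (deriv ψ) z) + Complex.abs (deriv ψ z) ^ 2) := by
    intro n z hz
    have ha := haln n
    have h0 := habs0 n
    apply G_pointwise hψ hmap ha hz (by linarith) (by linarith)
    have hzψ : Complex.abs (ψ z) ≤ 1 := le_of_lt (by simpa using hmap hz)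
    nlinarith
  have intG : ∀ n, Integrable (G n) dA := by
    intro n
    have ha := haln n; have h0 := habs0 n
    apply integrable_of_lintegral (measurable_deriv _)
    set K := (1 - Complex.abs (α n) ^ 2) * (2 / (1 - Complex.abs (α n)) ^ 3) with hK
    have hK0 : 0 ≤ K := by
      have h3 : (0:ℝ) < (1 - Complex.abs (α n)) ^ 3 := by
        apply pow_pos; linarith
      rw [hK]
      apply mul_nonneg (by nlinarith) (by positivity)
    calc ∫⁻ z, ENNReal.ofReal (Complex.abs (G n z)) ∂dA
        ≤ ∫⁻ z, ENNReal.ofReal K * ENNReal.ofReal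
            (Complex.abs (deriv (deriv ψ) z) + Complex.abs (deriv ψ z) ^ 2) ∂dA := by
          apply lintegral_mono_ae
          filter_upwards [dA_ae_ball] with z hz
          rw [← ENNReal.ofReal_mul hK0]
          exact ENNReal.ofReal_le_ofReal (hGb n z hz)
      _ = ENNReal.ofReal K * ∫⁻ z, ENNReal.ofReal
            (Complex.abs (deriv (deriv ψ) z) + Complex.abs (deriv ψ z) ^ 2) ∂dA :=
          lintegral_const_mul' _ _ ENNReal.ofReal_ne_top
      _ < ⊤ := ENNReal.mul_lt_top ENNReal.ofReal_lt_top hψint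
  -- choice of r with small tail for F
  obtain ⟨r, hr0, hr1, hFtail⟩ := small_tail F hmF hfint (half_pos hε)
  set S := closedBall (0:ℂ) r with hS
  have hSball : S ⊆ ball (0:ℂ) 1 := closedBall_subset_ball hr1
  have hScompact : IsCompact S := isCompact_closedBall _ _
  have hSne : (0:ℂ) ∈ S := mem_closedBall_self hr0
  -- sup of |ψ| on S
  obtain ⟨z₀, hz₀S, hz₀'⟩ := hScompact.exists_isMaxOn ⟨0, hSne⟩
    (Complex.continuous_abs.comp_continuousOn (hψ.continuousOn.mono hSball))
  have hz₀ : ∀ z ∈ S, Complex.abs (ψ z) ≤ Complex.abs (ψ z₀) := fun z hz => hz₀' hz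
  set ρ := Complex.abs (ψ z₀) with hρ
  have hρ0 : 0 ≤ ρ := Complex.abs.nonneg _
  have hρ1 : ρ < 1 := by simpa [hρ] using hmap (hSball hz₀S)
  -- sup of |ψ''| + |ψ'|² on S
  have hψa : AnalyticOnNhd ℂ ψ (ball (0:ℂ) 1) := hψ.analyticOnNhd isOpen_ball
  have hcont2 : ContinuousOn
      (fun z => Complex.abs (deriv (deriv ψ) z) + Complex.abs (deriv ψ z) ^ 2) S := by
    apply ContinuousOn.add
    · exact Complex.continuous_abs.comp_continuousOn
        ((hψa.deriv.deriv.continuousOn).mono hSball)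
    · exact (Complex.continuous_abs.comp_continuousOn
        ((hψa.deriv.continuousOn).mono hSball)).pow 2
  obtain ⟨w₀, hw₀S, hw₀'⟩ := hScompact.exists_isMaxOn ⟨0, hSne⟩ hcont2
  have hw₀ : ∀ z ∈ S, Complex.abs (deriv (deriv ψ) z) + Complex.abs (deriv ψ z) ^ 2
      ≤ Complex.abs (deriv (deriv ψ) w₀) + Complex.abs (deriv ψ w₀) ^ 2 :=
    fun z hz => hw₀' hz
  set M := Complex.abs (deriv (deriv ψ) w₀) + Complex.abs (deriv ψ w₀) ^ 2 with hM
  have hM0 : 0 ≤ M := by rw [hM]; positivity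
  set C := 2 / (1 - ρ) ^ 3 with hC
  have hC0 : 0 ≤ C := by
    rw [hC]; apply div_nonneg (by norm_num); apply pow_nonneg; linarith
  set m := (dA S).toReal with hm
  have hm0 : 0 ≤ m := ENNReal.toReal_nonneg
  -- bound of G n on S
  have hGS : ∀ n, ∀ z ∈ S, Complex.abs (G n z)
      ≤ (1 - Complex.abs (α n) ^ 2) * C * M := by
    intro n z hz
    have ha := haln n; have h0 := habs0 n
    have hψz : Complex.abs (ψ z) ≤ ρ := hz₀ z hz
    have hψz0 : 0 ≤ Complex.abs (ψ z) := Complex.abs.nonneg _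
    have h1 := G_pointwise hψ hmap ha (hSball hz) (d := 1 - ρ)
      (by linarith) (by linarith) (by nlinarith)
    have h2 := hw₀ z hz
    have hnn : (0:ℝ) ≤ (1 - Complex.abs (α n) ^ 2) * C := by
      apply mul_nonneg (by nlinarith) hC0
    calc Complex.abs (G n z)
        ≤ (1 - Complex.abs (α n) ^ 2) * (2 / (1 - ρ) ^ 3)
            * (Complex.abs (deriv (deriv ψ) z) + Complex.abs (deriv ψ z) ^ 2) := h1
      _ = (1 - Complex.abs (α n) ^ 2) * C
            * (Complex.abs (deriv (deriv ψ) z) + Complex.abs (deriv ψ z) ^ 2) := by rw [hC]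
      _ ≤ (1 - Complex.abs (α n) ^ 2) * C * M := mul_le_mul_of_nonneg_left h2 hnn
  -- set-integral bound on S
  have hSineq : ∀ n, ∫ z in S, Complex.abs (G n z) ∂dA
      ≤ (1 - Complex.abs (α n) ^ 2) * C * M * m := by
    intro n
    have hint1 : IntegrableOn (fun z => Complex.abs (G n z)) S dA := by
      rw [habs_eq]; exact ((intG n).norm).integrableOn
    have hint2 : IntegrableOn (fun _ : ℂ => (1 - Complex.abs (α n) ^ 2) * C * M) S dA :=
      integrableOn_const (dA_finite S).ne
    calc ∫ z in S, Complex.abs (G n z) ∂dA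
        ≤ ∫ _ in S, (1 - Complex.abs (α n) ^ 2) * C * M ∂dA :=
          setIntegral_mono_on hint1 hint2 measurableSet_closedBall (hGS n)
      _ = m * ((1 - Complex.abs (α n) ^ 2) * C * M) := by
          rw [setIntegral_const, smul_eq_mul, hm, measureReal_def]
      _ = (1 - Complex.abs (α n) ^ 2) * C * M * m := by ring
  -- choose N
  have htend0 : Tendsto (fun n => (1 - Complex.abs (α n) ^ 2) * C * M * m)
      atTop (nhds 0) := by
    have h1 : Tendsto (fun n => 1 - Complex.abs (α n) ^ 2) atTop (nhds 0) := by
      have h2 : Tendsto (fun n => Complex.abs (α n) ^ 2) atTop (nhds 1) := by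
        have := hα1.mul hα1
        norm_num at this
        simpa [pow_two] using this
      have h3 := (tendsto_const_nhds (α := ℕ) (x := (1:ℝ))).sub h2
      simpa using h3
    have h3 := h1.mul_const (C * M * m)
    simp only [zero_mul] at h3
    simpa [mul_assoc] using h3
  have hev : ∀ᶠ n in atTop, (1 - Complex.abs (α n) ^ 2) * C * M * m < ε/2 :=
    htend0.eventually_lt_const (half_pos hε)
  obtain ⟨N, hN⟩ := eventually_atTop.1 hev
  refine ⟨N, fun n hn => ?_⟩
  show (∫ z, Complex.abs (G n z - F z) ∂dA) ≥ (∫ z, Complex.abs (G n z) ∂dA) - ε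
  have intGF : Integrable (fun z => Complex.abs (G n z - F z)) dA := by
    rw [habs_eq]; exact ((intG n).sub intF).norm
  have intGabs : Integrable (fun z => Complex.abs (G n z)) dA := by
    rw [habs_eq]; exact (intG n).norm
  have intFabs : Integrable (fun z => Complex.abs (F z)) dA := by
    rw [habs_eq]; exact intF.norm
  have split : (∫ z in S, Complex.abs (G n z) ∂dA) + (∫ z in Sᶜ, Complex.abs (G n z) ∂dA)
      = ∫ z, Complex.abs (G n z) ∂dA :=
    integral_add_compl measurableSet_closedBall intGabs
  have tri : ∀ z, Complex.abs (G n z) ≤ Complex.abs (G n z - F z) + Complex.abs (F z) := by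
    intro z
    have := Complex.abs.add_le (G n z - F z) (F z)
    simpa using this
  have h2 : (∫ z in Sᶜ, Complex.abs (G n z) ∂dA)
      ≤ (∫ z in Sᶜ, Complex.abs (G n z - F z) ∂dA) + ∫ z in Sᶜ, Complex.abs (F z) ∂dA := by
    rw [← integral_add (intGF.restrict) (intFabs.restrict)]
    exact integral_mono (intGabs.restrict) ((intGF.restrict).add (intFabs.restrict)) tri
  have h3 : (∫ z in Sᶜ, Complex.abs (G n z - F z) ∂dA)
      ≤ ∫ z, Complex.abs (G n z - F z) ∂dA :=
    setIntegral_le_integral intGF (Filter.Eventually.of_forall fun z => Complex.abs.nonneg _)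
  have h4 := hSineq n
  have h5 := hN n hn
  have h6 := hFtail
  have t1 : (∫ (z : ℂ) in Sᶜ, Complex.abs (F z) ∂dA) ≤ ε/2 := h6
  have t2 : (∫ (z : ℂ) in S, Complex.abs (G n z) ∂dA) ≤ (1 - Complex.abs (α n) ^ 2) * C * M * m := h4
  have t3 := le_trans h2 (by linarith : (∫ (z : ℂ) in Sᶜ, Complex.abs (G n z - F z) ∂dA) + ∫ (z : ℂ) in Sᶜ, Complex.abs (F z) ∂dA ≤ (∫ (z : ℂ), Complex.abs (G n z - F z) ∂dA) + ε/2)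
  have key : ∫ z, Complex.abs (G n z) ∂dA ≤ (∫ z, Complex.abs (G n z - F z) ∂dA) + ε := by
    rw [← split]
    have := add_le_add (t2.trans h5.le) t3
    linarith
  linarith
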